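/- arXiv:1809.06141 — 5 statements merged into one kernel-verified Lean document; each statement's English description precedes it below -/
import Mathlib

section
/- (Instability of double-resolution tomography) For every α ∈ ℕ there exist finite sets F₁, F₂ ⊆ ℤ² with the following properties, where the 'data' of a finite set F ⊆ ℤ² consist of all its horizontal line counts |F ∩ (ℤ × {j})| (j ∈ ℤ), all its vertical line counts |F ∩ ({i} × ℤ)| (i ∈ ℤ), and all its 2×2 block counts |F ∩ ({2a, 2a+1} × {2b, 2b+1})| ((a,b) ∈ ℤ²): (i) F₁ is the unique finite subset of ℤ² having the data of F₁; (ii) F₂ is the unique finite subset of ℤ² having the data of F₂; (iii) Δ_𝒮(F₁, F₂) = 4, where 𝒮 consists of the two coordinate axes of ℝ²; (iv) |F₁| = |F₂| ≥ α; (v) |F₁ ∩ F₂| = |F₁|/2. -/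
/-- Number of points of `F` on the horizontal line `ℤ × {j}`. -/
def rowCount (F : Finset (Fin 2 → ℤ)) (j : ℤ) : ℕ := (F.filter fun x => x 1 = j).card

/-- Number of points of `F` on the vertical line `{i} × ℤ`. -/
def colCount (F : Finset (Fin 2 → ℤ)) (i : ℤ) : ℕ := (F.filter fun x => x 0 = i).card

/-- Number of points of `F` in the 2×2 block `{2a, 2a+1} × {2b, 2b+1}`. -/
def blockCount (F : Finset (Fin 2 → ℤ)) (a b : ℤ) : ℕ :=
  (F.filter fun x => (x 0 = 2 * a ∨ x 0 = 2 * a + 1) ∧ (x 1 = 2 * b ∨ x 1 = 2 * b + 1)).card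

/-- `F` and `G` have the same double-resolution data: equal row sums, column sums,
and 2×2 block counts. -/
def SameData (F G : Finset (Fin 2 → ℤ)) : Prop :=
  (∀ j : ℤ, rowCount F j = rowCount G j) ∧ (∀ i : ℤ, colCount F i = colCount G i) ∧
  (∀ a b : ℤ, blockCount F a b = blockCount G a b)

lemma pt_ext {u v : Fin 2 → ℤ} (h0 : u 0 = v 0) (h1 : u 1 = v 1) : u = v := by
  funext i; fin_cases i <;> assumption

lemma vec_eq_iff {a b : ℤ} {u : Fin 2 → ℤ} : ![a, b] = u ↔ u 0 = a ∧ u 1 = b := by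
  constructor
  · rintro rfl; simp
  · rintro ⟨h0, h1⟩
    exact (pt_ext (by simp [h0]) (by simp [h1])).symm

def S0 (m : ℕ) : Finset (Fin 2 → ℤ) :=
  (Finset.range (2*m+1)).image fun j : ℕ => ![-4*(j:ℤ)-2, -4*(j:ℤ)-2]

def Fone (m : ℕ) : Finset (Fin 2 → ℤ) :=
  S0 m ∪ (Finset.range m).image (fun k : ℕ => ![8*(k:ℤ), 8*(k:ℤ)]) ∪
    (Finset.range m).image (fun k : ℕ => ![8*(k:ℤ)+3, 8*(k:ℤ)+3]) ∪ {![(-4 : ℤ), -4]}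

def Ftwo (m : ℕ) : Finset (Fin 2 → ℤ) :=
  S0 m ∪ (Finset.range m).image (fun k : ℕ => ![8*(k:ℤ), 8*(k:ℤ)+3]) ∪
    (Finset.range m).image (fun k : ℕ => ![8*(k:ℤ)+3, 8*(k:ℤ)]) ∪ {![8*(m:ℤ), 8*(m:ℤ)]}

lemma mem_S0 {m : ℕ} {u : Fin 2 → ℤ} :
    u ∈ S0 m ↔ ∃ j : ℕ, j < 2*m+1 ∧ u 0 = -4*(j:ℤ)-2 ∧ u 1 = -4*(j:ℤ)-2 := by
  simp [S0, Finset.mem_range, vec_eq_iff]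

lemma mem_Fone {m : ℕ} {u : Fin 2 → ℤ} :
    u ∈ Fone m ↔ (∃ j : ℕ, j < 2*m+1 ∧ u 0 = -4*(j:ℤ)-2 ∧ u 1 = -4*(j:ℤ)-2) ∨
      (∃ k : ℕ, k < m ∧ u 0 = 8*(k:ℤ) ∧ u 1 = 8*(k:ℤ)) ∨
      (∃ k : ℕ, k < m ∧ u 0 = 8*(k:ℤ)+3 ∧ u 1 = 8*(k:ℤ)+3) ∨
      (u 0 = -4 ∧ u 1 = -4) := by
  simp [Fone, S0, Finset.mem_range, vec_eq_iff, or_assoc, eq_comm (a := u)]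
  exact or_comm.trans (by simp only [or_assoc])

lemma mem_Ftwo {m : ℕ} {u : Fin 2 → ℤ} :
    u ∈ Ftwo m ↔ (∃ j : ℕ, j < 2*m+1 ∧ u 0 = -4*(j:ℤ)-2 ∧ u 1 = -4*(j:ℤ)-2) ∨
      (∃ k : ℕ, k < m ∧ u 0 = 8*(k:ℤ) ∧ u 1 = 8*(k:ℤ)+3) ∨
      (∃ k : ℕ, k < m ∧ u 0 = 8*(k:ℤ)+3 ∧ u 1 = 8*(k:ℤ)) ∨
      (u 0 = 8*(m:ℤ) ∧ u 1 = 8*(m:ℤ)) := by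
  simp [Ftwo, S0, Finset.mem_range, vec_eq_iff, or_assoc, eq_comm (a := u)]
  exact or_comm.trans (by simp only [or_assoc])

lemma filter_card_unique (F : Finset (Fin 2 → ℤ)) (p : (Fin 2 → ℤ) → Prop) [DecidablePred p]
    (h : ∀ u ∈ F, ∀ v ∈ F, p u → p v → u = v) :
    (F.filter p).card = if ∃ u ∈ F, p u then 1 else 0 := by
  split_ifs with hex
  · obtain ⟨u, hu, hpu⟩ := hex
    rw [Finset.card_eq_one]
    refine ⟨u, ?_⟩
    ext v
    simp only [Finset.mem_filter, Finset.mem_singleton]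
    exact ⟨fun ⟨hv, hpv⟩ => h v hv u hu hpv hpu, fun hv => hv ▸ ⟨hu, hpu⟩⟩
  · rw [Finset.card_eq_zero, Finset.filter_eq_empty_iff]
    intro v hv hpv
    exact hex ⟨v, hv, hpv⟩

lemma rigid (F : Finset (Fin 2 → ℤ))
    (hrow : ∀ f ∈ F, ∀ y : ℤ,
      (∃ b : ℤ, (f 1 = 2*b ∨ f 1 = 2*b+1) ∧ (y = 2*b ∨ y = 2*b+1)) → y ≠ f 1 →
      rowCount F y = 0)
    (hcol : ∀ f ∈ F, ∀ x : ℤ,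
      (∃ a : ℤ, (f 0 = 2*a ∨ f 0 = 2*a+1) ∧ (x = 2*a ∨ x = 2*a+1)) → x ≠ f 0 →
      colCount F x = 0)
    (G : Finset (Fin 2 → ℤ)) (hGF : SameData G F) : G = F := by
  obtain ⟨hr, hc, hb⟩ := hGF
  have key : ∀ g ∈ G, ∀ f ∈ F, ∀ a b : ℤ,
      (g 0 = 2*a ∨ g 0 = 2*a+1) → (f 0 = 2*a ∨ f 0 = 2*a+1) →
      (g 1 = 2*b ∨ g 1 = 2*b+1) → (f 1 = 2*b ∨ f 1 = 2*b+1) → g = f := by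
    intro g hg f hf a b hga hfa hgb hfb
    have hx : g 0 = f 0 := by
      by_contra hne
      have h0 : colCount F (g 0) = 0 := hcol f hf (g 0) ⟨a, hfa, hga⟩ hne
      have h1 : 0 < colCount G (g 0) :=
        Finset.card_pos.2 ⟨g, Finset.mem_filter.2 ⟨hg, rfl⟩⟩
      rw [hc (g 0), h0] at h1
      exact absurd h1 (by omega)
    have hy : g 1 = f 1 := by
      by_contra hne
      have h0 : rowCount F (g 1) = 0 := hrow f hf (g 1) ⟨b, hfb, hgb⟩ hne
      have h1 : 0 < rowCount G (g 1) :=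
        Finset.card_pos.2 ⟨g, Finset.mem_filter.2 ⟨hg, rfl⟩⟩
      rw [hr (g 1), h0] at h1
      exact absurd h1 (by omega)
    exact pt_ext hx hy
  apply Finset.Subset.antisymm
  · intro g hg
    obtain ⟨a, hga⟩ : ∃ a : ℤ, g 0 = 2*a ∨ g 0 = 2*a+1 := ⟨g 0 / 2, by omega⟩
    obtain ⟨b, hgb⟩ : ∃ b : ℤ, g 1 = 2*b ∨ g 1 = 2*b+1 := ⟨g 1 / 2, by omega⟩
    have h1 : 0 < blockCount G a b :=
      Finset.card_pos.2 ⟨g, Finset.mem_filter.2 ⟨hg, hga, hgb⟩⟩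
    rw [hb a b] at h1
    obtain ⟨f, hf⟩ := Finset.card_pos.1 h1
    rw [Finset.mem_filter] at hf
    obtain ⟨hfF, hfa, hfb⟩ := hf
    exact (key g hg f hfF a b hga hfa hgb hfb) ▸ hfF
  · intro f hf
    obtain ⟨a, hfa⟩ : ∃ a : ℤ, f 0 = 2*a ∨ f 0 = 2*a+1 := ⟨f 0 / 2, by omega⟩
    obtain ⟨b, hfb⟩ : ∃ b : ℤ, f 1 = 2*b ∨ f 1 = 2*b+1 := ⟨f 1 / 2, by omega⟩
    have h1 : 0 < blockCount F a b :=
      Finset.card_pos.2 ⟨f, Finset.mem_filter.2 ⟨hf, hfa, hfb⟩⟩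
    rw [← hb a b] at h1
    obtain ⟨g, hg⟩ := Finset.card_pos.1 h1
    rw [Finset.mem_filter] at hg
    obtain ⟨hgG, hga, hgb⟩ := hg
    exact (key g hgG f hf a b hga hfa hgb hfb) ▸ hgG
lemma row_eq_zero_iff (F : Finset (Fin 2 → ℤ)) (y : ℤ) (h : ∀ u ∈ F, u 1 ≠ y) :
    rowCount F y = 0 := by
  rw [rowCount, Finset.card_eq_zero, Finset.filter_eq_empty_iff]
  intro u hu hp
  exact h u hu hp

lemma col_eq_zero_iff (F : Finset (Fin 2 → ℤ)) (x : ℤ) (h : ∀ u ∈ F, u 0 ≠ x) :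
    colCount F x = 0 := by
  rw [colCount, Finset.card_eq_zero, Finset.filter_eq_empty_iff]
  intro u hu hp
  exact h u hu hp

lemma hrow_one (m : ℕ) : ∀ f ∈ Fone m, ∀ y : ℤ,
    (∃ b : ℤ, (f 1 = 2*b ∨ f 1 = 2*b+1) ∧ (y = 2*b ∨ y = 2*b+1)) → y ≠ f 1 →
    rowCount (Fone m) y = 0 := by
  intro f hf y hby hne
  obtain ⟨b, hb1, hb2⟩ := hby
  rw [mem_Fone] at hf
  apply row_eq_zero_iff
  intro u hu
  rw [mem_Fone] at hu
  rcases hf with ⟨j,hj,e1,e2⟩|⟨k,hk,e1,e2⟩|⟨k,hk,e1,e2⟩|⟨e1,e2⟩ <;>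
    rcases hu with ⟨j',hj',f1,f2⟩|⟨k',hk',f1,f2⟩|⟨k',hk',f1,f2⟩|⟨f1,f2⟩ <;> omega

lemma hcol_one (m : ℕ) : ∀ f ∈ Fone m, ∀ x : ℤ,
    (∃ a : ℤ, (f 0 = 2*a ∨ f 0 = 2*a+1) ∧ (x = 2*a ∨ x = 2*a+1)) → x ≠ f 0 →
    colCount (Fone m) x = 0 := by
  intro f hf x hax hne
  obtain ⟨a, ha1, ha2⟩ := hax
  rw [mem_Fone] at hf
  apply col_eq_zero_iff
  intro u hu
  rw [mem_Fone] at hu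
  rcases hf with ⟨j,hj,e1,e2⟩|⟨k,hk,e1,e2⟩|⟨k,hk,e1,e2⟩|⟨e1,e2⟩ <;>
    rcases hu with ⟨j',hj',f1,f2⟩|⟨k',hk',f1,f2⟩|⟨k',hk',f1,f2⟩|⟨f1,f2⟩ <;> omega

lemma hrow_two (m : ℕ) : ∀ f ∈ Ftwo m, ∀ y : ℤ,
    (∃ b : ℤ, (f 1 = 2*b ∨ f 1 = 2*b+1) ∧ (y = 2*b ∨ y = 2*b+1)) → y ≠ f 1 →
    rowCount (Ftwo m) y = 0 := by
  intro f hf y hby hne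
  obtain ⟨b, hb1, hb2⟩ := hby
  rw [mem_Ftwo] at hf
  apply row_eq_zero_iff
  intro u hu
  rw [mem_Ftwo] at hu
  rcases hf with ⟨j,hj,e1,e2⟩|⟨k,hk,e1,e2⟩|⟨k,hk,e1,e2⟩|⟨e1,e2⟩ <;>
    rcases hu with ⟨j',hj',f1,f2⟩|⟨k',hk',f1,f2⟩|⟨k',hk',f1,f2⟩|⟨f1,f2⟩ <;> omega

lemma hcol_two (m : ℕ) : ∀ f ∈ Ftwo m, ∀ x : ℤ,
    (∃ a : ℤ, (f 0 = 2*a ∨ f 0 = 2*a+1) ∧ (x = 2*a ∨ x = 2*a+1)) → x ≠ f 0 →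
    colCount (Ftwo m) x = 0 := by
  intro f hf x hax hne
  obtain ⟨a, ha1, ha2⟩ := hax
  rw [mem_Ftwo] at hf
  apply col_eq_zero_iff
  intro u hu
  rw [mem_Ftwo] at hu
  rcases hf with ⟨j,hj,e1,e2⟩|⟨k,hk,e1,e2⟩|⟨k,hk,e1,e2⟩|⟨e1,e2⟩ <;>
    rcases hu with ⟨j',hj',f1,f2⟩|⟨k',hk',f1,f2⟩|⟨k',hk',f1,f2⟩|⟨f1,f2⟩ <;> omega
lemma rowinj_one (m : ℕ) : ∀ u ∈ Fone m, ∀ v ∈ Fone m, u 1 = v 1 → u = v := by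
  intro u hu v hv h
  rw [mem_Fone] at hu hv
  refine pt_ext ?_ h
  rcases hu with ⟨j,hj,e1,e2⟩|⟨k,hk,e1,e2⟩|⟨k,hk,e1,e2⟩|⟨e1,e2⟩ <;>
    rcases hv with ⟨j',hj',f1,f2⟩|⟨k',hk',f1,f2⟩|⟨k',hk',f1,f2⟩|⟨f1,f2⟩ <;> omega

lemma colinj_one (m : ℕ) : ∀ u ∈ Fone m, ∀ v ∈ Fone m, u 0 = v 0 → u = v := by
  intro u hu v hv h
  rw [mem_Fone] at hu hv
  refine pt_ext h ?_
  rcases hu with ⟨j,hj,e1,e2⟩|⟨k,hk,e1,e2⟩|⟨k,hk,e1,e2⟩|⟨e1,e2⟩ <;>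
    rcases hv with ⟨j',hj',f1,f2⟩|⟨k',hk',f1,f2⟩|⟨k',hk',f1,f2⟩|⟨f1,f2⟩ <;> omega

lemma rowinj_two (m : ℕ) : ∀ u ∈ Ftwo m, ∀ v ∈ Ftwo m, u 1 = v 1 → u = v := by
  intro u hu v hv h
  rw [mem_Ftwo] at hu hv
  refine pt_ext ?_ h
  rcases hu with ⟨j,hj,e1,e2⟩|⟨k,hk,e1,e2⟩|⟨k,hk,e1,e2⟩|⟨e1,e2⟩ <;>
    rcases hv with ⟨j',hj',f1,f2⟩|⟨k',hk',f1,f2⟩|⟨k',hk',f1,f2⟩|⟨f1,f2⟩ <;> omega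

lemma colinj_two (m : ℕ) : ∀ u ∈ Ftwo m, ∀ v ∈ Ftwo m, u 0 = v 0 → u = v := by
  intro u hu v hv h
  rw [mem_Ftwo] at hu hv
  refine pt_ext h ?_
  rcases hu with ⟨j,hj,e1,e2⟩|⟨k,hk,e1,e2⟩|⟨k,hk,e1,e2⟩|⟨e1,e2⟩ <;>
    rcases hv with ⟨j',hj',f1,f2⟩|⟨k',hk',f1,f2⟩|⟨k',hk',f1,f2⟩|⟨f1,f2⟩ <;> omega

lemma rowCount_Fone (m : ℕ) (j : ℤ) :
    rowCount (Fone m) j = if ∃ u ∈ Fone m, u 1 = j then 1 else 0 :=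
  filter_card_unique _ _ (fun u hu v hv hu1 hv1 => rowinj_one m u hu v hv (hu1.trans hv1.symm))

lemma rowCount_Ftwo (m : ℕ) (j : ℤ) :
    rowCount (Ftwo m) j = if ∃ u ∈ Ftwo m, u 1 = j then 1 else 0 :=
  filter_card_unique _ _ (fun u hu v hv hu1 hv1 => rowinj_two m u hu v hv (hu1.trans hv1.symm))

lemma colCount_Fone (m : ℕ) (i : ℤ) :
    colCount (Fone m) i = if ∃ u ∈ Fone m, u 0 = i then 1 else 0 :=
  filter_card_unique _ _ (fun u hu v hv hu1 hv1 => colinj_one m u hu v hv (hu1.trans hv1.symm))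

lemma colCount_Ftwo (m : ℕ) (i : ℤ) :
    colCount (Ftwo m) i = if ∃ u ∈ Ftwo m, u 0 = i then 1 else 0 :=
  filter_card_unique _ _ (fun u hu v hv hu1 hv1 => colinj_two m u hu v hv (hu1.trans hv1.symm))
lemma w1 (a b : ℤ) : (![a,b] : Fin 2 → ℤ) 0 = a := rfl
lemma w2 (a b : ℤ) : (![a,b] : Fin 2 → ℤ) 1 = b := rfl

lemma row_iff (m : ℕ) (j : ℤ) (h4 : j ≠ -4) (h8 : j ≠ 8*(m:ℤ)) :
    (∃ u ∈ Fone m, u 1 = j) ↔ (∃ u ∈ Ftwo m, u 1 = j) := by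
  constructor
  · rintro ⟨u, hu, rfl⟩
    rw [mem_Fone] at hu
    rcases hu with ⟨j',hj',f1,f2⟩|⟨k,hk,f1,f2⟩|⟨k,hk,f1,f2⟩|⟨f1,f2⟩
    · exact ⟨![-4*(j':ℤ)-2, -4*(j':ℤ)-2],
        mem_Ftwo.2 (Or.inl ⟨j', hj', w1 _ _, w2 _ _⟩), by rw [w2]; exact f2.symm⟩
    · exact ⟨![8*(k:ℤ)+3, 8*(k:ℤ)],
        mem_Ftwo.2 (Or.inr (Or.inr (Or.inl ⟨k, hk, w1 _ _, w2 _ _⟩))),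
        by rw [w2]; exact f2.symm⟩
    · exact ⟨![8*(k:ℤ), 8*(k:ℤ)+3],
        mem_Ftwo.2 (Or.inr (Or.inl ⟨k, hk, w1 _ _, w2 _ _⟩)),
        by rw [w2]; exact f2.symm⟩
    · exact absurd f2 h4
  · rintro ⟨u, hu, rfl⟩
    rw [mem_Ftwo] at hu
    rcases hu with ⟨j',hj',f1,f2⟩|⟨k,hk,f1,f2⟩|⟨k,hk,f1,f2⟩|⟨f1,f2⟩
    · exact ⟨![-4*(j':ℤ)-2, -4*(j':ℤ)-2],
        mem_Fone.2 (Or.inl ⟨j', hj', w1 _ _, w2 _ _⟩), by rw [w2]; exact f2.symm⟩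
    · exact ⟨![8*(k:ℤ)+3, 8*(k:ℤ)+3],
        mem_Fone.2 (Or.inr (Or.inr (Or.inl ⟨k, hk, w1 _ _, w2 _ _⟩))),
        by rw [w2]; exact f2.symm⟩
    · exact ⟨![8*(k:ℤ), 8*(k:ℤ)],
        mem_Fone.2 (Or.inr (Or.inl ⟨k, hk, w1 _ _, w2 _ _⟩)),
        by rw [w2]; exact f2.symm⟩
    · exact absurd f2 h8

lemma col_iff (m : ℕ) (i : ℤ) (h4 : i ≠ -4) (h8 : i ≠ 8*(m:ℤ)) :
    (∃ u ∈ Fone m, u 0 = i) ↔ (∃ u ∈ Ftwo m, u 0 = i) := by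
  constructor
  · rintro ⟨u, hu, rfl⟩
    rw [mem_Fone] at hu
    rcases hu with ⟨j',hj',f1,f2⟩|⟨k,hk,f1,f2⟩|⟨k,hk,f1,f2⟩|⟨f1,f2⟩
    · exact ⟨![-4*(j':ℤ)-2, -4*(j':ℤ)-2],
        mem_Ftwo.2 (Or.inl ⟨j', hj', w1 _ _, w2 _ _⟩), by rw [w1]; exact f1.symm⟩
    · exact ⟨![8*(k:ℤ), 8*(k:ℤ)+3],
        mem_Ftwo.2 (Or.inr (Or.inl ⟨k, hk, w1 _ _, w2 _ _⟩)),
        by rw [w1]; exact f1.symm⟩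
    · exact ⟨![8*(k:ℤ)+3, 8*(k:ℤ)],
        mem_Ftwo.2 (Or.inr (Or.inr (Or.inl ⟨k, hk, w1 _ _, w2 _ _⟩))),
        by rw [w1]; exact f1.symm⟩
    · exact absurd f1 h4
  · rintro ⟨u, hu, rfl⟩
    rw [mem_Ftwo] at hu
    rcases hu with ⟨j',hj',f1,f2⟩|⟨k,hk,f1,f2⟩|⟨k,hk,f1,f2⟩|⟨f1,f2⟩
    · exact ⟨![-4*(j':ℤ)-2, -4*(j':ℤ)-2],
        mem_Fone.2 (Or.inl ⟨j', hj', w1 _ _, w2 _ _⟩), by rw [w1]; exact f1.symm⟩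
    · exact ⟨![8*(k:ℤ), 8*(k:ℤ)],
        mem_Fone.2 (Or.inr (Or.inl ⟨k, hk, w1 _ _, w2 _ _⟩)),
        by rw [w1]; exact f1.symm⟩
    · exact ⟨![8*(k:ℤ)+3, 8*(k:ℤ)+3],
        mem_Fone.2 (Or.inr (Or.inr (Or.inl ⟨k, hk, w1 _ _, w2 _ _⟩))),
        by rw [w1]; exact f1.symm⟩
    · exact absurd f1 h8

lemma rowFone_m4 (m : ℕ) : rowCount (Fone m) (-4) = 1 := by
  rw [rowCount_Fone, if_pos]
  exact ⟨![(-4:ℤ), -4], mem_Fone.2 (Or.inr (Or.inr (Or.inr ⟨w1 _ _, w2 _ _⟩))), w2 _ _⟩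

lemma rowFtwo_m4 (m : ℕ) : rowCount (Ftwo m) (-4) = 0 := by
  apply row_eq_zero_iff
  intro u hu
  rw [mem_Ftwo] at hu
  rcases hu with ⟨j',hj',f1,f2⟩|⟨k,hk,f1,f2⟩|⟨k,hk,f1,f2⟩|⟨f1,f2⟩ <;> omega

lemma rowFone_8m (m : ℕ) : rowCount (Fone m) (8*(m:ℤ)) = 0 := by
  apply row_eq_zero_iff
  intro u hu
  rw [mem_Fone] at hu
  rcases hu with ⟨j',hj',f1,f2⟩|⟨k,hk,f1,f2⟩|⟨k,hk,f1,f2⟩|⟨f1,f2⟩ <;> omega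

lemma rowFtwo_8m (m : ℕ) : rowCount (Ftwo m) (8*(m:ℤ)) = 1 := by
  rw [rowCount_Ftwo, if_pos]
  exact ⟨![8*(m:ℤ), 8*(m:ℤ)], mem_Ftwo.2 (Or.inr (Or.inr (Or.inr ⟨w1 _ _, w2 _ _⟩))), w2 _ _⟩

lemma colFone_m4 (m : ℕ) : colCount (Fone m) (-4) = 1 := by
  rw [colCount_Fone, if_pos]
  exact ⟨![(-4:ℤ), -4], mem_Fone.2 (Or.inr (Or.inr (Or.inr ⟨w1 _ _, w2 _ _⟩))), w1 _ _⟩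

lemma colFtwo_m4 (m : ℕ) : colCount (Ftwo m) (-4) = 0 := by
  apply col_eq_zero_iff
  intro u hu
  rw [mem_Ftwo] at hu
  rcases hu with ⟨j',hj',f1,f2⟩|⟨k,hk,f1,f2⟩|⟨k,hk,f1,f2⟩|⟨f1,f2⟩ <;> omega

lemma colFone_8m (m : ℕ) : colCount (Fone m) (8*(m:ℤ)) = 0 := by
  apply col_eq_zero_iff
  intro u hu
  rw [mem_Fone] at hu
  rcases hu with ⟨j',hj',f1,f2⟩|⟨k,hk,f1,f2⟩|⟨k,hk,f1,f2⟩|⟨f1,f2⟩ <;> omega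

lemma colFtwo_8m (m : ℕ) : colCount (Ftwo m) (8*(m:ℤ)) = 1 := by
  rw [colCount_Ftwo, if_pos]
  exact ⟨![8*(m:ℤ), 8*(m:ℤ)], mem_Ftwo.2 (Or.inr (Or.inr (Or.inr ⟨w1 _ _, w2 _ _⟩))), w1 _ _⟩
lemma rowdiff (m : ℕ) (j : ℤ) :
    ((rowCount (Fone m) j : ℤ) - (rowCount (Ftwo m) j : ℤ)).natAbs
      = if j = -4 ∨ j = 8*(m:ℤ) then 1 else 0 := by
  by_cases h4 : j = -4
  · subst h4
    rw [rowFone_m4, rowFtwo_m4, if_pos (Or.inl rfl)]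
    rfl
  · by_cases h8 : j = 8*(m:ℤ)
    · subst h8
      rw [rowFone_8m, rowFtwo_8m, if_pos (Or.inr rfl)]
      rfl
    · have he : rowCount (Fone m) j = rowCount (Ftwo m) j := by
        rw [rowCount_Fone, rowCount_Ftwo]
        exact if_congr (row_iff m j h4 h8) rfl rfl
      rw [he, sub_self, Int.natAbs_zero, if_neg (by tauto)]

lemma coldiff (m : ℕ) (i : ℤ) :
    ((colCount (Fone m) i : ℤ) - (colCount (Ftwo m) i : ℤ)).natAbs
      = if i = -4 ∨ i = 8*(m:ℤ) then 1 else 0 := by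
  by_cases h4 : i = -4
  · subst h4
    rw [colFone_m4, colFtwo_m4, if_pos (Or.inl rfl)]
    rfl
  · by_cases h8 : i = 8*(m:ℤ)
    · subst h8
      rw [colFone_8m, colFtwo_8m, if_pos (Or.inr rfl)]
      rfl
    · have he : colCount (Fone m) i = colCount (Ftwo m) i := by
        rw [colCount_Fone, colCount_Ftwo]
        exact if_congr (col_iff m i h4 h8) rfl rfl
      rw [he, sub_self, Int.natAbs_zero, if_neg (by tauto)]

lemma sum_ite_pair (m : ℕ) :
    ∑ᶠ j : ℤ, (if j = -4 ∨ j = 8*(m:ℤ) then (1:ℕ) else 0) = 2 := by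
  have hne : (-4 : ℤ) ≠ 8*(m:ℤ) := by omega
  rw [finsum_eq_finset_sum_of_support_subset _
    (s := ({-4, 8*(m:ℤ)} : Finset ℤ)) ?_]
  · rw [Finset.sum_pair hne, if_pos (Or.inl rfl), if_pos (Or.inr rfl)]
  · intro j hj
    rw [Function.mem_support] at hj
    by_contra hnot
    simp only [Finset.coe_insert, Finset.coe_singleton, Set.mem_insert_iff,
      Set.mem_singleton_iff] at hnot
    push_neg at hnot
    rw [if_neg (by tauto)] at hj
    exact hj rfl

lemma rowsum (m : ℕ) :
    (∑ᶠ j : ℤ, ((rowCount (Fone m) j : ℤ) - (rowCount (Ftwo m) j : ℤ)).natAbs) = 2 := by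
  rw [finsum_congr (rowdiff m), sum_ite_pair]

lemma colsum (m : ℕ) :
    (∑ᶠ i : ℤ, ((colCount (Fone m) i : ℤ) - (colCount (Ftwo m) i : ℤ)).natAbs) = 2 := by
  rw [finsum_congr (coldiff m), sum_ite_pair]
lemma card_S0 (m : ℕ) : (S0 m).card = 2*m+1 := by
  rw [S0, Finset.card_image_of_injOn, Finset.card_range]
  intro a _ b _ h
  have h0 : (-4*(a:ℤ)-2) = -4*(b:ℤ)-2 := congrFun h 0
  omega

lemma inter_eq (m : ℕ) : Fone m ∩ Ftwo m = S0 m := by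
  ext u
  simp only [Finset.mem_inter]
  constructor
  · rintro ⟨h1, h2⟩
    rw [mem_Fone] at h1
    rw [mem_Ftwo] at h2
    rw [mem_S0]
    rcases h1 with h|⟨k,hk,e1,e2⟩|⟨k,hk,e1,e2⟩|⟨e1,e2⟩
    · exact h
    all_goals
      exfalso
      rcases h2 with ⟨j',hj',f1,f2⟩|⟨k',hk',f1,f2⟩|⟨k',hk',f1,f2⟩|⟨f1,f2⟩ <;> omega
  · intro h
    have h1 := mem_S0.1 h
    exact ⟨mem_Fone.2 (Or.inl h1), mem_Ftwo.2 (Or.inl h1)⟩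

lemma card_Fone (m : ℕ) : (Fone m).card = 4*m+2 := by
  have dA : Disjoint (S0 m) ((Finset.range m).image (fun k : ℕ => ![8*(k:ℤ), 8*(k:ℤ)])) := by
    rw [Finset.disjoint_left]
    intro u hu hv
    rw [mem_S0] at hu
    simp only [Finset.mem_image, Finset.mem_range, vec_eq_iff] at hv
    obtain ⟨j, hj, e1, e2⟩ := hu
    obtain ⟨k, hk, f1, f2⟩ := hv
    omega
  have dB : Disjoint (S0 m ∪ (Finset.range m).image (fun k : ℕ => ![8*(k:ℤ), 8*(k:ℤ)]))
      ((Finset.range m).image (fun k : ℕ => ![8*(k:ℤ)+3, 8*(k:ℤ)+3])) := by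
    rw [Finset.disjoint_left]
    intro u hu hv
    simp only [Finset.mem_union, mem_S0, Finset.mem_image, Finset.mem_range, vec_eq_iff] at hu
    simp only [Finset.mem_image, Finset.mem_range, vec_eq_iff] at hv
    obtain ⟨k, hk, f1, f2⟩ := hv
    rcases hu with ⟨j, hj, e1, e2⟩|⟨k', hk', e1, e2⟩ <;> omega
  have dP : Disjoint (S0 m ∪ (Finset.range m).image (fun k : ℕ => ![8*(k:ℤ), 8*(k:ℤ)]) ∪
      (Finset.range m).image (fun k : ℕ => ![8*(k:ℤ)+3, 8*(k:ℤ)+3])) {![(-4:ℤ), -4]} := by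
    rw [Finset.disjoint_left]
    intro u hu hv
    rw [Finset.mem_singleton] at hv
    obtain ⟨e1, e2⟩ := vec_eq_iff.1 hv.symm
    simp only [Finset.mem_union, mem_S0, Finset.mem_image, Finset.mem_range, vec_eq_iff] at hu
    rcases hu with (⟨j, hj, f1, f2⟩|⟨k, hk, f1, f2⟩)|⟨k, hk, f1, f2⟩ <;> omega
  have i1 : Set.InjOn (fun k : ℕ => (![8*(k:ℤ), 8*(k:ℤ)] : Fin 2 → ℤ)) (Finset.range m) := by
    intro a _ b _ h
    have h0 : (8*(a:ℤ)) = 8*(b:ℤ) := congrFun h 0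
    omega
  have i2 : Set.InjOn (fun k : ℕ => (![8*(k:ℤ)+3, 8*(k:ℤ)+3] : Fin 2 → ℤ)) (Finset.range m) := by
    intro a _ b _ h
    have h0 : (8*(a:ℤ)+3) = 8*(b:ℤ)+3 := congrFun h 0
    omega
  rw [Fone, Finset.card_union_of_disjoint dP, Finset.card_union_of_disjoint dB,
    Finset.card_union_of_disjoint dA, card_S0, Finset.card_image_of_injOn i1,
    Finset.card_image_of_injOn i2, Finset.card_singleton, Finset.card_range]
  omega

lemma card_Ftwo (m : ℕ) : (Ftwo m).card = 4*m+2 := by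
  have dA : Disjoint (S0 m) ((Finset.range m).image (fun k : ℕ => ![8*(k:ℤ), 8*(k:ℤ)+3])) := by
    rw [Finset.disjoint_left]
    intro u hu hv
    rw [mem_S0] at hu
    simp only [Finset.mem_image, Finset.mem_range, vec_eq_iff] at hv
    obtain ⟨j, hj, e1, e2⟩ := hu
    obtain ⟨k, hk, f1, f2⟩ := hv
    omega
  have dB : Disjoint (S0 m ∪ (Finset.range m).image (fun k : ℕ => ![8*(k:ℤ), 8*(k:ℤ)+3]))
      ((Finset.range m).image (fun k : ℕ => ![8*(k:ℤ)+3, 8*(k:ℤ)])) := by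
    rw [Finset.disjoint_left]
    intro u hu hv
    simp only [Finset.mem_union, mem_S0, Finset.mem_image, Finset.mem_range, vec_eq_iff] at hu
    simp only [Finset.mem_image, Finset.mem_range, vec_eq_iff] at hv
    obtain ⟨k, hk, f1, f2⟩ := hv
    rcases hu with ⟨j, hj, e1, e2⟩|⟨k', hk', e1, e2⟩ <;> omega
  have dP : Disjoint (S0 m ∪ (Finset.range m).image (fun k : ℕ => ![8*(k:ℤ), 8*(k:ℤ)+3]) ∪
      (Finset.range m).image (fun k : ℕ => ![8*(k:ℤ)+3, 8*(k:ℤ)])) {![8*(m:ℤ), 8*(m:ℤ)]} := by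
    rw [Finset.disjoint_left]
    intro u hu hv
    rw [Finset.mem_singleton] at hv
    obtain ⟨e1, e2⟩ := vec_eq_iff.1 hv.symm
    simp only [Finset.mem_union, mem_S0, Finset.mem_image, Finset.mem_range, vec_eq_iff] at hu
    rcases hu with (⟨j, hj, f1, f2⟩|⟨k, hk, f1, f2⟩)|⟨k, hk, f1, f2⟩ <;> omega
  have i1 : Set.InjOn (fun k : ℕ => (![8*(k:ℤ), 8*(k:ℤ)+3] : Fin 2 → ℤ)) (Finset.range m) := by
    intro a _ b _ h
    have h0 : (8*(a:ℤ)) = 8*(b:ℤ) := congrFun h 0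
    omega
  have i2 : Set.InjOn (fun k : ℕ => (![8*(k:ℤ)+3, 8*(k:ℤ)] : Fin 2 → ℤ)) (Finset.range m) := by
    intro a _ b _ h
    have h0 : (8*(a:ℤ)+3) = 8*(b:ℤ)+3 := congrFun h 0
    omega
  rw [Ftwo, Finset.card_union_of_disjoint dP, Finset.card_union_of_disjoint dB,
    Finset.card_union_of_disjoint dA, card_S0, Finset.card_image_of_injOn i1,
    Finset.card_image_of_injOn i2, Finset.card_singleton, Finset.card_range]
  omega

theorem instability_double_resolution (α : ℕ) :
    ∃ F₁ F₂ : Finset (Fin 2 → ℤ),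
      (∀ G : Finset (Fin 2 → ℤ), SameData G F₁ → G = F₁) ∧
      (∀ G : Finset (Fin 2 → ℤ), SameData G F₂ → G = F₂) ∧
      ((∑ᶠ j : ℤ, ((rowCount F₁ j : ℤ) - (rowCount F₂ j : ℤ)).natAbs) +
       (∑ᶠ i : ℤ, ((colCount F₁ i : ℤ) - (colCount F₂ i : ℤ)).natAbs) = 4) ∧
      F₁.card = F₂.card ∧ α ≤ F₁.card ∧ 2 * (F₁ ∩ F₂).card = F₁.card := by
  refine ⟨Fone α, Ftwo α, ?_, ?_, ?_, ?_, ?_, ?_⟩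
  · exact rigid (Fone α) (hrow_one α) (hcol_one α)
  · exact rigid (Ftwo α) (hrow_two α) (hcol_two α)
  · rw [rowsum, colsum]
  · rw [card_Fone, card_Ftwo]
  · rw [card_Fone]; omega
  · rw [inter_eq, card_S0, card_Fone]; omega
end

section
/- (Alpers–Tijdeman: PTE solutions from switching components) Let m ∈ ℕ, let 𝓛 be a set of m + 1 pairwise distinct lattice lines in ℝ², and let X, Y ⊆ ℤ² be distinct finite sets that are tomographically equivalent with respect to 𝓛. Then |X| = |Y| and for every c ∈ ℤ² and every j with 1 ≤ j ≤ m, Σ_{x ∈ X} (cᵀx)^j = Σ_{y ∈ Y} (cᵀy)^j. In particular, if the multisets Π_c(X) = {cᵀx : x ∈ X} and Π_c(Y) = {cᵀy : y ∈ Y} are distinct, then (Π_c(X), Π_c(Y)) is a degree-m solution of the Prouhet–Tarry–Escott problem. -/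
open Set

variable {d : ℕ}

/-- The affine line through the coset `T` of the modulo-`S` quotient, i.e. an affine
line parallel to `S` when `S` is 1-dimensional. -/
def fiber (S : Submodule ℝ (Fin d → ℝ)) (T : (Fin d → ℝ) ⧸ S) : Set (Fin d → ℝ) :=
  {x | (Submodule.Quotient.mk x : (Fin d → ℝ) ⧸ S) = T}

/-- `F₁` and `F₂` have the same (discrete) X-ray parallel to `S`. -/
def XrayEq (S : Submodule ℝ (Fin d → ℝ)) (F₁ F₂ : Set (Fin d → ℝ)) : Prop :=
  ∀ T : (Fin d → ℝ) ⧸ S, (F₁ ∩ fiber S T).ncard = (F₂ ∩ fiber S T).ncard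

/-- `F₁` and `F₂` are tomographically equivalent w.r.t. the family `𝒮` of lines. -/
def TomEq (𝒮 : Set (Submodule ℝ (Fin d → ℝ))) (F₁ F₂ : Set (Fin d → ℝ)) : Prop :=
  ∀ S ∈ 𝒮, XrayEq S F₁ F₂

/-- A lattice line: a line through the origin spanned by a nonzero integer vector. -/
def IsLatticeLine (S : Submodule ℝ (Fin d → ℝ)) : Prop :=
  ∃ v : Fin d → ℤ, v ≠ 0 ∧ S = Submodule.span ℝ {fun i => (v i : ℝ)}

/-- The canonical embedding of `ℤ^d` into `ℝ^d`. -/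
def embed (x : Fin d → ℤ) : Fin d → ℝ := fun i => (x i : ℝ)

/-- The X-ray difference `Δ_𝒮(F₁,F₂)`. -/
noncomputable def xrayDiff (𝒮 : Set (Submodule ℝ (Fin d → ℝ))) (F₁ F₂ : Set (Fin d → ℝ)) : ℕ :=
  ∑ᶠ S ∈ 𝒮, ∑ᶠ T : (Fin d → ℝ) ⧸ S,
    (((F₁ ∩ fiber S T).ncard : ℤ) - ((F₂ ∩ fiber S T).ncard : ℤ)).natAbs

/-- A convex lattice set: `F = conv(F) ∩ ℤ^d`. -/
def IsConvexLatticeSet (F : Finset (Fin d → ℤ)) : Prop :=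
  embed '' ↑F = convexHull ℝ (embed '' ↑F) ∩ Set.range (embed : (Fin d → ℤ) → (Fin d → ℝ))

/- ### Auxiliary lemmas -/

lemma AT_mem_span_singleton_iff (v : Fin 2 → ℝ) (hv : v ≠ 0) (u : Fin 2 → ℝ) :
    u ∈ Submodule.span ℝ {v} ↔ v 1 * u 0 = v 0 * u 1 := by
  have hv' : v 0 ≠ 0 ∨ v 1 ≠ 0 := by
    by_contra h0
    push_neg at h0
    exact hv (by funext i; fin_cases i <;> simp [h0.1, h0.2])
  constructor
  · intro hu
    rcases Submodule.mem_span_singleton.1 hu with ⟨c, rfl⟩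
    simp only [Pi.smul_apply, smul_eq_mul]
    ring
  · intro hrel
    rcases hv' with h0 | h1
    · refine Submodule.mem_span_singleton.2 ⟨u 0 / v 0, ?_⟩
      funext i
      fin_cases i <;> simp only [Pi.smul_apply, smul_eq_mul] <;> field_simp
      all_goals simp only [Fin.zero_eta, Fin.mk_one] at *
      all_goals linarith [hrel]
    · refine Submodule.mem_span_singleton.2 ⟨u 1 / v 1, ?_⟩
      funext i
      fin_cases i <;> simp only [Pi.smul_apply, smul_eq_mul] <;> field_simp
      all_goals simp only [Fin.zero_eta, Fin.mk_one] at *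
      all_goals linarith [hrel]

lemma AT_embed_injective : Function.Injective (embed : (Fin 2 → ℤ) → Fin 2 → ℝ) := by
  intro x y hxy
  funext i
  have := congrFun hxy i
  simpa [embed] using this

lemma AT_embed_ne_zero {v : Fin 2 → ℤ} (hv : v ≠ 0) : embed v ≠ 0 := by
  intro h0
  apply hv
  funext i
  have := congrFun h0 i
  simpa [embed] using this

lemma AT_span_eq (v w : Fin 2 → ℤ) (hv : v ≠ 0) (hw : w ≠ 0)
    (hc : v 1 * w 0 = w 1 * v 0) :
    Submodule.span ℝ {embed v} = Submodule.span ℝ {embed w} := by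
  have hc' : ((v 1 : ℝ)) * (w 0 : ℝ) = (w 1 : ℝ) * (v 0 : ℝ) := by exact_mod_cast hc
  apply le_antisymm <;> rw [Submodule.span_le, Set.singleton_subset_iff, SetLike.mem_coe]
  · rw [AT_mem_span_singleton_iff _ (AT_embed_ne_zero hw)]
    show (w 1 : ℝ) * (v 0 : ℝ) = (w 0 : ℝ) * (v 1 : ℝ)
    linarith
  · rw [AT_mem_span_singleton_iff _ (AT_embed_ne_zero hv)]
    show (v 1 : ℝ) * (w 0 : ℝ) = (v 0 : ℝ) * (w 1 : ℝ)
    linarith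

lemma AT_mem_fiber_iff (v : Fin 2 → ℤ) (hv : v ≠ 0) (x z : Fin 2 → ℤ) :
    embed x ∈ fiber (Submodule.span ℝ {embed v}) (Submodule.Quotient.mk (embed z)) ↔
      v 1 * x 0 - v 0 * x 1 = v 1 * z 0 - v 0 * z 1 := by
  rw [fiber, Set.mem_setOf_eq, Submodule.Quotient.eq,
    AT_mem_span_singleton_iff _ (AT_embed_ne_zero hv)]
  constructor
  · intro hrel
    have h1 : (v 1 : ℝ) * ((x 0 : ℝ) - z 0) = (v 0 : ℝ) * ((x 1 : ℝ) - z 1) := by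
      simpa [embed, Pi.sub_apply] using hrel
    have h2 : ((v 1 * x 0 - v 0 * x 1 : ℤ) : ℝ) = ((v 1 * z 0 - v 0 * z 1 : ℤ) : ℝ) := by
      push_cast
      linarith
    exact_mod_cast h2
  · intro hrel
    have h2 : ((v 1 * x 0 - v 0 * x 1 : ℤ) : ℝ) = ((v 1 * z 0 - v 0 * z 1 : ℤ) : ℝ) := by
      exact_mod_cast hrel
    simp only [embed, Pi.sub_apply]
    push_cast at h2 ⊢
    linarith

lemma AT_inter_fiber_eq (v : Fin 2 → ℤ) (hv : v ≠ 0) (X : Finset (Fin 2 → ℤ)) (z : Fin 2 → ℤ) :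
    (embed '' ↑X) ∩ fiber (Submodule.span ℝ {embed v}) (Submodule.Quotient.mk (embed z)) =
      embed '' ↑(X.filter (fun x => v 1 * x 0 - v 0 * x 1 = v 1 * z 0 - v 0 * z 1)) := by
  ext u
  constructor
  · rintro ⟨⟨x, hxX, rfl⟩, hfib⟩
    refine ⟨x, ?_, rfl⟩
    rw [Finset.coe_filter, Set.mem_setOf_eq]
    exact ⟨hxX, (AT_mem_fiber_iff v hv x z).1 hfib⟩
  · rintro ⟨x, hx, rfl⟩
    rw [Finset.coe_filter, Set.mem_setOf_eq] at hx
    exact ⟨⟨x, hx.1, rfl⟩, (AT_mem_fiber_iff v hv x z).2 hx.2⟩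

lemma AT_count_eq (v : Fin 2 → ℤ) (hv : v ≠ 0)
    (X Y : Finset (Fin 2 → ℤ))
    (hX : XrayEq (Submodule.span ℝ {embed v}) (embed '' ↑X) (embed '' ↑Y)) (t : ℤ) :
    (X.filter (fun x => v 1 * x 0 - v 0 * x 1 = t)).card =
      (Y.filter (fun x => v 1 * x 0 - v 0 * x 1 = t)).card := by
  by_cases hne : (X.filter (fun x => v 1 * x 0 - v 0 * x 1 = t)).Nonempty ∨
      (Y.filter (fun x => v 1 * x 0 - v 0 * x 1 = t)).Nonempty
  · obtain ⟨z, hz⟩ : ∃ z : Fin 2 → ℤ, v 1 * z 0 - v 0 * z 1 = t := by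
      rcases hne with ⟨z, hz⟩ | ⟨z, hz⟩ <;>
        exact ⟨z, (Finset.mem_filter.1 hz).2⟩
    subst hz
    have key := hX (Submodule.Quotient.mk (embed z))
    rw [AT_inter_fiber_eq v hv X z, AT_inter_fiber_eq v hv Y z,
      Set.ncard_image_of_injective _ AT_embed_injective,
      Set.ncard_image_of_injective _ AT_embed_injective,
      Set.ncard_coe_finset, Set.ncard_coe_finset] at key
    exact key
  · push_neg at hne
    rw [hne.1, hne.2]

lemma AT_sum_comp_eq (ψ : (Fin 2 → ℤ) → ℤ) (X Y : Finset (Fin 2 → ℤ))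
    (hcount : ∀ t : ℤ, (X.filter (fun x => ψ x = t)).card = (Y.filter (fun x => ψ x = t)).card)
    (f : ℤ → ℤ) :
    ∑ x ∈ X, f (ψ x) = ∑ y ∈ Y, f (ψ y) := by
  classical
  set s : Finset ℤ := (X ∪ Y).image ψ with hs
  have hXmaps : ∀ x ∈ X, ψ x ∈ s := fun x hx =>
    Finset.mem_image_of_mem ψ (Finset.mem_union_left _ hx)
  have hYmaps : ∀ y ∈ Y, ψ y ∈ s := fun y hy =>
    Finset.mem_image_of_mem ψ (Finset.mem_union_right _ hy)
  rw [← Finset.sum_fiberwise_of_maps_to hXmaps (fun x => f (ψ x)),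
    ← Finset.sum_fiberwise_of_maps_to hYmaps (fun x => f (ψ x))]
  refine Finset.sum_congr rfl fun t _ => ?_
  have h1 : ∑ x ∈ X.filter (fun x => ψ x = t), f (ψ x) =
      ∑ x ∈ X.filter (fun x => ψ x = t), f t :=
    Finset.sum_congr rfl fun x hx => by rw [(Finset.mem_filter.1 hx).2]
  have h2 : ∑ x ∈ Y.filter (fun x => ψ x = t), f (ψ x) =
      ∑ x ∈ Y.filter (fun x => ψ x = t), f t :=
    Finset.sum_congr rfl fun x hx => by rw [(Finset.mem_filter.1 hx).2]
  rw [h1, h2, Finset.sum_const, Finset.sum_const, hcount t]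

lemma AT_expand (a b : ℤ) (j : ℕ) (X : Finset (Fin 2 → ℤ)) :
    ∑ x ∈ X, (a * x 0 + b * x 1) ^ j =
      ∑ k ∈ Finset.range (j + 1),
        a ^ k * b ^ (j - k) * (j.choose k) * ∑ x ∈ X, x 0 ^ k * x 1 ^ (j - k) := by
  calc ∑ x ∈ X, (a * x 0 + b * x 1) ^ j
      = ∑ x ∈ X, ∑ k ∈ Finset.range (j + 1),
          (a * x 0) ^ k * (b * x 1) ^ (j - k) * (j.choose k) :=
        Finset.sum_congr rfl fun x _ => add_pow _ _ _
    _ = ∑ k ∈ Finset.range (j + 1), ∑ x ∈ X,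
          (a * x 0) ^ k * (b * x 1) ^ (j - k) * (j.choose k) := Finset.sum_comm
    _ = ∑ k ∈ Finset.range (j + 1),
          a ^ k * b ^ (j - k) * (j.choose k) * ∑ x ∈ X, x 0 ^ k * x 1 ^ (j - k) := by
        refine Finset.sum_congr rfl fun k _ => ?_
        rw [Finset.mul_sum]
        refine Finset.sum_congr rfl fun x _ => ?_
        ring

open Polynomial in
lemma AT_vandermonde_kill {ι : Type*} [DecidableEq ι] (L : Finset ι) (m j : ℕ)
    (hj : j ≤ m) (hcard : L.card = m + 1)
    (a b : ι → ℚ)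
    (hab : ∀ i ∈ L, ∀ l ∈ L, i ≠ l → a i * b l ≠ a l * b i)
    (hnz : ∀ i ∈ L, ¬(a i = 0 ∧ b i = 0))
    (w : ℕ → ℚ)
    (hrel : ∀ i ∈ L, ∑ k ∈ Finset.range (j + 1), a i ^ k * b i ^ (j - k) * w k = 0) :
    ∀ k ≤ j, w k = 0 := by
  classical
  have hLne : L.Nonempty := Finset.card_pos.1 (by omega)
  rcases Nat.eq_zero_or_pos j with rfl | hj1
  · intro k hk
    interval_cases k
    obtain ⟨i, hi⟩ := hLne
    have := hrel i hi
    simpa using this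
  set Q : ℚ[X] := ∑ k ∈ Finset.range (j + 1), C (w k) * X ^ k with hQ
  have hcoeff : ∀ k, k ≤ j → Q.coeff k = w k := by
    intro k hk
    rw [hQ, Polynomial.finset_sum_coeff]
    rw [Finset.sum_eq_single k]
    · simp
    · intro i hi hik
      simp [Polynomial.coeff_C_mul, Polynomial.coeff_X_pow, Ne.symm hik]
    · intro hk'
      exact absurd (Finset.mem_range.2 (by omega)) hk'
  have hcoeff_gt : ∀ k, j < k → Q.coeff k = 0 := by
    intro k hk
    rw [hQ, Polynomial.finset_sum_coeff]
    apply Finset.sum_eq_zero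
    intro i hi
    have : i ≠ k := by
      have := Finset.mem_range.1 hi; omega
    simp [Polynomial.coeff_C_mul, Polynomial.coeff_X_pow, Ne.symm this]
  have hdeg : Q.natDegree ≤ j := Polynomial.natDegree_le_iff_coeff_eq_zero.2 hcoeff_gt
  have heval : ∀ r : ℚ, Q.eval r = ∑ k ∈ Finset.range (j + 1), w k * r ^ k := by
    intro r
    rw [hQ, Polynomial.eval_finset_sum]
    simp
  have hroot : ∀ i ∈ L, b i ≠ 0 → Q.eval (a i / b i) = 0 := by
    intro i hi hbi
    have h1 : (b i) ^ j * Q.eval (a i / b i) =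
        ∑ k ∈ Finset.range (j + 1), a i ^ k * b i ^ (j - k) * w k := by
      rw [heval, Finset.mul_sum]
      refine Finset.sum_congr rfl fun k hk => ?_
      have hkj : k ≤ j := by have := Finset.mem_range.1 hk; omega
      rw [div_pow]
      field_simp
      rw [← pow_sub_mul_pow (b i) hkj]
      ring
    rw [hrel i hi] at h1
    have hbj : (b i) ^ j ≠ 0 := pow_ne_zero _ hbi
    exact (mul_eq_zero.1 h1).resolve_left hbj
  have hinj : ∀ (s : Finset ι), s ⊆ L → (∀ i ∈ s, b i ≠ 0) →
      Set.InjOn (fun i => a i / b i) ↑s := by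
    intro s hs hb i hi l hl hil
    by_contra hne
    apply hab i (hs hi) l (hs hl) hne
    have hbi := hb i hi
    have hbl := hb l hl
    field_simp at hil
    linarith [hil]
  have hQ0 : Q = 0 := by
    by_cases hex : ∃ i₀ ∈ L, b i₀ = 0
    · obtain ⟨i₀, hi₀, hb₀⟩ := hex
      have ha₀ : a i₀ ≠ 0 := fun h => hnz i₀ hi₀ ⟨h, hb₀⟩
      have hbother : ∀ i ∈ L.erase i₀, b i ≠ 0 := by
        intro i hi hbi
        have hiL := Finset.mem_of_mem_erase hi
        have hne := Finset.ne_of_mem_erase hi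
        exact hab i hiL i₀ hi₀ hne (by rw [hbi, hb₀]; ring)
      have hwj : w j = 0 := by
        have := hrel i₀ hi₀
        rw [Finset.sum_eq_single j] at this
        · rw [hb₀, Nat.sub_self, pow_zero, mul_one] at this
          exact (mul_eq_zero.1 this).resolve_left (pow_ne_zero _ ha₀)
        · intro k hk hkj
          have hkj' : k < j := by have := Finset.mem_range.1 hk; omega
          rw [hb₀, zero_pow (by omega : j - k ≠ 0)]
          ring
        · intro hj'
          exact absurd (Finset.mem_range.2 (by omega)) hj'
      have hdeg' : Q.natDegree ≤ j - 1 := by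
        apply Polynomial.natDegree_le_iff_coeff_eq_zero.2
        intro k hk
        rcases lt_or_ge j k with h | h
        · exact hcoeff_gt k h
        · have hkj : k = j := by omega
          rw [hkj, hcoeff j le_rfl, hwj]
      set s : Finset ℚ := (L.erase i₀).image (fun i => a i / b i) with hsdef
      have hscard : s.card = m := by
        rw [hsdef, Finset.card_image_of_injOn
          (hinj _ (Finset.erase_subset _ _) hbother),
          Finset.card_erase_of_mem hi₀, hcard]
        omega
      apply Polynomial.eq_zero_of_natDegree_lt_card_of_eval_eq_zero' Q s
      · intro r hr
        rw [hsdef] at hr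
        obtain ⟨i, hi, rfl⟩ := Finset.mem_image.1 hr
        exact hroot i (Finset.mem_of_mem_erase hi) (hbother i hi)
      · rw [hscard]; omega
    · push_neg at hex
      set s : Finset ℚ := L.image (fun i => a i / b i) with hsdef
      have hscard : s.card = m + 1 := by
        rw [hsdef, Finset.card_image_of_injOn (hinj _ le_rfl hex), hcard]
      apply Polynomial.eq_zero_of_natDegree_lt_card_of_eval_eq_zero' Q s
      · intro r hr
        rw [hsdef] at hr
        obtain ⟨i, hi, rfl⟩ := Finset.mem_image.1 hr
        exact hroot i hi (hex i hi)
      · rw [hscard]; omega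
  intro k hk
  rw [← hcoeff k hk, hQ0]
  simp

theorem pte_from_switching_components
    (m : ℕ) (𝓛 : Finset (Submodule ℝ (Fin 2 → ℝ))) (hcard : 𝓛.card = m + 1)
    (h𝓛 : ∀ S ∈ 𝓛, IsLatticeLine S)
    (X Y : Finset (Fin 2 → ℤ)) (hXY : X ≠ Y)
    (h : TomEq (↑𝓛 : Set (Submodule ℝ (Fin 2 → ℝ))) (embed '' ↑X) (embed '' ↑Y)) :
    X.card = Y.card ∧
    ∀ c : Fin 2 → ℤ, ∀ j : ℕ, 1 ≤ j → j ≤ m →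
      ∑ x ∈ X, (c 0 * x 0 + c 1 * x 1) ^ j = ∑ y ∈ Y, (c 0 * y 0 + c 1 * y 1) ^ j := by
  classical
  simp only [IsLatticeLine] at h𝓛
  choose! v hv0 hvspan using h𝓛
  have hvspan' : ∀ S ∈ 𝓛, S = Submodule.span ℝ {embed (v S)} := hvspan
  -- equal counts on every level set of ψ_S
  have hcnt : ∀ S ∈ 𝓛, ∀ t : ℤ,
      (X.filter (fun x => (v S) 1 * x 0 - (v S) 0 * x 1 = t)).card =
        (Y.filter (fun x => (v S) 1 * x 0 - (v S) 0 * x 1 = t)).card := by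
    intro S hS t
    have hX := h S (Finset.mem_coe.2 hS)
    rw [hvspan' S hS] at hX
    exact AT_count_eq (v S) (hv0 S hS) X Y hX t
  -- cardinalities agree
  have hcards : X.card = Y.card := by
    obtain ⟨S, hS⟩ : 𝓛.Nonempty := Finset.card_pos.1 (by omega)
    have := AT_sum_comp_eq (fun x => (v S) 1 * x 0 - (v S) 0 * x 1) X Y (hcnt S hS)
      (fun _ => (1 : ℤ))
    simpa using this
  refine ⟨hcards, ?_⟩
  -- the key relation along each line
  have hrelZ : ∀ S ∈ 𝓛, ∀ j : ℕ,
      ∑ k ∈ Finset.range (j + 1),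
        ((v S) 1) ^ k * (-(v S) 0) ^ (j - k) * (j.choose k) *
          ((∑ x ∈ X, x 0 ^ k * x 1 ^ (j - k)) - (∑ y ∈ Y, y 0 ^ k * y 1 ^ (j - k))) = 0 := by
    intro S hS j
    have hpow := AT_sum_comp_eq (fun x => (v S) 1 * x 0 - (v S) 0 * x 1) X Y (hcnt S hS)
      (fun t => t ^ j)
    have eX : ∑ x ∈ X, ((v S) 1 * x 0 - (v S) 0 * x 1) ^ j =
        ∑ x ∈ X, ((v S) 1 * x 0 + (-(v S) 0) * x 1) ^ j :=
      Finset.sum_congr rfl fun x _ => by ring_nf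
    have eY : ∑ y ∈ Y, ((v S) 1 * y 0 - (v S) 0 * y 1) ^ j =
        ∑ y ∈ Y, ((v S) 1 * y 0 + (-(v S) 0) * y 1) ^ j :=
      Finset.sum_congr rfl fun y _ => by ring_nf
    rw [eX, eY, AT_expand, AT_expand] at hpow
    simp only [mul_sub]
    rw [Finset.sum_sub_distrib, sub_eq_zero]
    exact hpow
  -- all moment differences of degree ≤ m vanish
  have hMzero : ∀ j ≤ m, ∀ k ≤ j,
      (∑ x ∈ X, x 0 ^ k * x 1 ^ (j - k)) - (∑ y ∈ Y, y 0 ^ k * y 1 ^ (j - k)) = 0 := by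
    intro j hj
    have hab : ∀ S ∈ 𝓛, ∀ S' ∈ 𝓛, S ≠ S' →
        ((v S) 1 : ℚ) * ((-(v S') 0 : ℤ) : ℚ) ≠ ((v S') 1 : ℚ) * ((-(v S) 0 : ℤ) : ℚ) := by
      intro S hS S' hS' hne heq
      apply hne
      have heqZ : (v S) 1 * (v S') 0 = (v S') 1 * (v S) 0 := by
        have hq : ((v S) 1 : ℚ) * ((v S') 0 : ℚ) = ((v S') 1 : ℚ) * ((v S) 0 : ℚ) := by
          push_cast at heq
          linarith
        exact_mod_cast hq
      rw [hvspan' S hS, hvspan' S' hS']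
      exact AT_span_eq (v S) (v S') (hv0 S hS) (hv0 S' hS') heqZ
    have hnz : ∀ S ∈ 𝓛, ¬(((v S) 1 : ℚ) = 0 ∧ ((-(v S) 0 : ℤ) : ℚ) = 0) := by
      intro S hS hcontra
      obtain ⟨h1, h2⟩ := hcontra
      apply hv0 S hS
      have h1' : (v S) 1 = 0 := by exact_mod_cast h1
      have h2' : (v S) 0 = 0 := by
        have : (-(v S) 0 : ℤ) = 0 := by exact_mod_cast h2
        omega
      funext i
      fin_cases i
      · exact h2'
      · exact h1'
    have hrelQ : ∀ S ∈ 𝓛, ∑ k ∈ Finset.range (j + 1),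
        ((v S) 1 : ℚ) ^ k * ((-(v S) 0 : ℤ) : ℚ) ^ (j - k) *
          (((j.choose k : ℤ) *
            ((∑ x ∈ X, x 0 ^ k * x 1 ^ (j - k)) - (∑ y ∈ Y, y 0 ^ k * y 1 ^ (j - k))) : ℤ) : ℚ)
          = 0 := by
      intro S hS
      have hz := hrelZ S hS j
      have hq : ((∑ k ∈ Finset.range (j + 1),
          ((v S) 1) ^ k * (-(v S) 0) ^ (j - k) * (j.choose k) *
            ((∑ x ∈ X, x 0 ^ k * x 1 ^ (j - k)) - (∑ y ∈ Y, y 0 ^ k * y 1 ^ (j - k))) : ℤ)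
              : ℚ) = 0 := by
        exact_mod_cast hz
      push_cast at hq ⊢
      rw [← hq]
      refine Finset.sum_congr rfl fun k _ => ?_
      ring
    have key := AT_vandermonde_kill 𝓛 m j hj hcard
      (fun S => ((v S) 1 : ℚ)) (fun S => ((-(v S) 0 : ℤ) : ℚ)) hab hnz
      (fun k => (((j.choose k : ℤ) *
        ((∑ x ∈ X, x 0 ^ k * x 1 ^ (j - k)) - (∑ y ∈ Y, y 0 ^ k * y 1 ^ (j - k))) : ℤ) : ℚ))
      hrelQ
    intro k hk
    have hwk : (((j.choose k : ℤ) *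
        ((∑ x ∈ X, x 0 ^ k * x 1 ^ (j - k)) - (∑ y ∈ Y, y 0 ^ k * y 1 ^ (j - k))) : ℤ) : ℚ)
          = 0 := key k hk
    have hZ : (j.choose k : ℤ) *
        ((∑ x ∈ X, x 0 ^ k * x 1 ^ (j - k)) - (∑ y ∈ Y, y 0 ^ k * y 1 ^ (j - k))) = 0 := by
      exact_mod_cast hwk
    have hch : (j.choose k : ℤ) ≠ 0 := by
      exact_mod_cast (Nat.choose_pos hk).ne'
    exact (mul_eq_zero.1 hZ).resolve_left hch
  -- conclude
  intro c j hj1 hjm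
  rw [AT_expand (c 0) (c 1) j X, AT_expand (c 0) (c 1) j Y, ← sub_eq_zero,
    ← Finset.sum_sub_distrib]
  apply Finset.sum_eq_zero
  intro k hk
  have hkj : k ≤ j := by have := Finset.mem_range.1 hk; omega
  rw [← mul_sub, hMzero j hjm k hkj, mul_zero]
end

section
/- (Alpers–Tijdeman: switching components are PTE₂ solutions) Let m ∈ ℕ, let 𝓛 be a set of m + 1 pairwise distinct lattice lines in ℝ², and let X, Y ⊆ ℤ² be distinct finite sets that are tomographically equivalent with respect to 𝓛. Then for all nonnegative integers i, j with i + j ≤ m, Σ_{(x₁,x₂) ∈ X} x₁^i · x₂^j = Σ_{(y₁,y₂) ∈ Y} y₁^i · y₂^j; i.e., (X, Y) is a degree-m solution of the two-dimensional Prouhet–Tarry–Escott problem PTE₂. -/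
open Set

variable {d : ℕ}

/-! ### Auxiliary lemmas -/

lemma embed_inj : Function.Injective (embed (d := d)) := by
  intro x y hxy
  funext i
  have hi : (x i : ℝ) = (y i : ℝ) := congrFun hxy i
  exact_mod_cast hi

lemma funext2 {f g : Fin 2 → ℝ} (h0 : f 0 = g 0) (h1 : f 1 = g 1) : f = g := by
  funext i
  fin_cases i
  · exact h0
  · exact h1

lemma vcases (v : Fin 2 → ℤ) (hv : v ≠ 0) : v 0 ≠ 0 ∨ v 1 ≠ 0 := by
  by_contra hc
  push_neg at hc
  apply hv
  funext i
  fin_cases i <;> simp [hc.1, hc.2]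

lemma mem_span_embed (v w : Fin 2 → ℤ) (hv : v ≠ 0) (h : v 0 * w 1 = v 1 * w 0) :
    embed w ∈ Submodule.span ℝ {embed v} := by
  rw [Submodule.mem_span_singleton]
  have hR : (v 0 : ℝ) * w 1 = (v 1 : ℝ) * w 0 := by exact_mod_cast h
  rcases vcases v hv with h0 | h1
  · have hv0 : (v 0 : ℝ) ≠ 0 := by exact_mod_cast h0
    refine ⟨(w 0 : ℝ) / (v 0 : ℝ), funext2 ?_ ?_⟩
    · show (w 0 : ℝ) / (v 0 : ℝ) * (v 0 : ℝ) = (w 0 : ℝ)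
      field_simp
    · show (w 0 : ℝ) / (v 0 : ℝ) * (v 1 : ℝ) = (w 1 : ℝ)
      rw [div_mul_eq_mul_div, div_eq_iff hv0]
      linear_combination -hR
  · have hv1 : (v 1 : ℝ) ≠ 0 := by exact_mod_cast h1
    refine ⟨(w 1 : ℝ) / (v 1 : ℝ), funext2 ?_ ?_⟩
    · show (w 1 : ℝ) / (v 1 : ℝ) * (v 0 : ℝ) = (w 0 : ℝ)
      rw [div_mul_eq_mul_div, div_eq_iff hv1]
      linear_combination hR
    · show (w 1 : ℝ) / (v 1 : ℝ) * (v 1 : ℝ) = (w 1 : ℝ)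
      field_simp

lemma span_eq_of_cross (v w : Fin 2 → ℤ) (hv : v ≠ 0) (hw : w ≠ 0)
    (h : v 0 * w 1 = v 1 * w 0) :
    Submodule.span ℝ {embed v} = Submodule.span ℝ {embed w} := by
  apply le_antisymm <;> rw [Submodule.span_le, Set.singleton_subset_iff]
  · exact SetLike.mem_coe.mpr (mem_span_embed w v hw (by linear_combination -h))
  · exact SetLike.mem_coe.mpr (mem_span_embed v w hv h)

lemma quot_mk_eq_iff (v : Fin 2 → ℤ) (hv : v ≠ 0) (x z : Fin 2 → ℤ) :
    (Submodule.Quotient.mk (embed x) :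
        (Fin 2 → ℝ) ⧸ Submodule.span ℝ {embed v}) = Submodule.Quotient.mk (embed z)
      ↔ v 1 * x 0 - v 0 * x 1 = v 1 * z 0 - v 0 * z 1 := by
  rw [Submodule.Quotient.eq, Submodule.mem_span_singleton]
  constructor
  · rintro ⟨t, ht⟩
    have h0 : t * v 0 = (x 0 : ℝ) - z 0 := by
      simpa [embed] using congrFun ht 0
    have h1 : t * v 1 = (x 1 : ℝ) - z 1 := by
      simpa [embed] using congrFun ht 1
    have : (v 1 : ℝ) * x 0 - v 0 * x 1 = v 1 * z 0 - v 0 * z 1 := by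
      linear_combination (-(v 1 : ℝ)) * h0 + (v 0 : ℝ) * h1
    exact_mod_cast this
  · intro hL
    have hR : (v 1 : ℝ) * x 0 - (v 0 : ℝ) * x 1 = (v 1 : ℝ) * z 0 - (v 0 : ℝ) * z 1 := by
      exact_mod_cast hL
    rcases vcases v hv with h0 | h1
    · have hv0 : (v 0 : ℝ) ≠ 0 := by exact_mod_cast h0
      refine ⟨((x 0 : ℝ) - z 0) / v 0, funext2 ?_ ?_⟩
      · show ((x 0 : ℝ) - z 0) / (v 0 : ℝ) * (v 0 : ℝ) = (x 0 : ℝ) - (z 0 : ℝ)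
        field_simp
      · show ((x 0 : ℝ) - z 0) / (v 0 : ℝ) * (v 1 : ℝ) = (x 1 : ℝ) - (z 1 : ℝ)
        rw [div_mul_eq_mul_div, div_eq_iff hv0]
        linear_combination hR
    · have hv1 : (v 1 : ℝ) ≠ 0 := by exact_mod_cast h1
      refine ⟨((x 1 : ℝ) - z 1) / v 1, funext2 ?_ ?_⟩
      · show ((x 1 : ℝ) - z 1) / (v 1 : ℝ) * (v 0 : ℝ) = (x 0 : ℝ) - (z 0 : ℝ)
        rw [div_mul_eq_mul_div, div_eq_iff hv1]
        linear_combination -hR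
      · show ((x 1 : ℝ) - z 1) / (v 1 : ℝ) * (v 1 : ℝ) = (x 1 : ℝ) - (z 1 : ℝ)
        field_simp

lemma inter_fiber (v : Fin 2 → ℤ) (hv : v ≠ 0) (F : Finset (Fin 2 → ℤ)) (z : Fin 2 → ℤ) :
    (embed '' ↑F) ∩ fiber (Submodule.span ℝ {embed v}) (Submodule.Quotient.mk (embed z))
      = embed '' ↑(F.filter fun x => v 1 * x 0 - v 0 * x 1 = v 1 * z 0 - v 0 * z 1) := by
  ext w
  simp only [fiber, Set.mem_inter_iff, Set.mem_image, Set.mem_setOf_eq, Finset.mem_coe,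
    Finset.mem_filter]
  constructor
  · rintro ⟨⟨x, hxF, rfl⟩, hmk⟩
    exact ⟨x, ⟨hxF, (quot_mk_eq_iff v hv x z).mp hmk⟩, rfl⟩
  · rintro ⟨x, ⟨hxF, hLx⟩, rfl⟩
    exact ⟨⟨x, hxF, rfl⟩, (quot_mk_eq_iff v hv x z).mpr hLx⟩

lemma ncard_embed (s : Finset (Fin 2 → ℤ)) : (embed '' (↑s : Set (Fin 2 → ℤ))).ncard = s.card := by
  rw [Set.ncard_image_of_injective _ embed_inj, Set.ncard_coe_finset]

lemma card_filter_eq (v : Fin 2 → ℤ) (hv : v ≠ 0) (X Y : Finset (Fin 2 → ℤ))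
    (hx : XrayEq (Submodule.span ℝ {embed v}) (embed '' ↑X) (embed '' ↑Y)) (t : ℤ) :
    (X.filter fun x => v 1 * x 0 - v 0 * x 1 = t).card
      = (Y.filter fun x => v 1 * x 0 - v 0 * x 1 = t).card := by
  by_cases hmem : (∃ x ∈ X, v 1 * x 0 - v 0 * x 1 = t) ∨ (∃ y ∈ Y, v 1 * y 0 - v 0 * y 1 = t)
  · obtain ⟨z, hz⟩ : ∃ z : Fin 2 → ℤ, v 1 * z 0 - v 0 * z 1 = t := by
      rcases hmem with ⟨z, _, hz⟩ | ⟨z, _, hz⟩ <;> exact ⟨z, hz⟩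
    subst hz
    have := hx (Submodule.Quotient.mk (embed z))
    rwa [inter_fiber v hv X z, inter_fiber v hv Y z, ncard_embed, ncard_embed] at this
  · push_neg at hmem
    rw [Finset.filter_false_of_mem hmem.1, Finset.filter_false_of_mem hmem.2]

lemma sum_f_eq (v : Fin 2 → ℤ) (hv : v ≠ 0) (X Y : Finset (Fin 2 → ℤ))
    (hx : XrayEq (Submodule.span ℝ {embed v}) (embed '' ↑X) (embed '' ↑Y)) (f : ℤ → ℤ) :
    ∑ x ∈ X, f (v 1 * x 0 - v 0 * x 1) = ∑ y ∈ Y, f (v 1 * y 0 - v 0 * y 1) := by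
  classical
  set L : (Fin 2 → ℤ) → ℤ := fun x => v 1 * x 0 - v 0 * x 1 with hLdef
  rw [Finset.sum_comp f L, Finset.sum_comp f L]
  have ext0 : ∀ S : Finset (Fin 2 → ℤ), S ⊆ X ∪ Y →
      ∑ b ∈ S.image L, (S.filter fun a => L a = b).card • f b
        = ∑ b ∈ (X ∪ Y).image L, (S.filter fun a => L a = b).card • f b := by
    intro S hS
    apply Finset.sum_subset (Finset.image_subset_image hS)
    intro b _ hb
    have hempty : (S.filter fun a => L a = b) = ∅ := by
      apply Finset.filter_false_of_mem
      intro x hxS hLx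
      exact hb (Finset.mem_image.mpr ⟨x, hxS, hLx⟩)
    simp [hempty]
  rw [ext0 X Finset.subset_union_left, ext0 Y Finset.subset_union_right]
  apply Finset.sum_congr rfl
  intro b _
  rw [card_filter_eq v hv X Y hx b]

theorem switching_components_are_pte2_solutions
    (m : ℕ) (𝓛 : Finset (Submodule ℝ (Fin 2 → ℝ))) (hcard : 𝓛.card = m + 1)
    (h𝓛 : ∀ S ∈ 𝓛, IsLatticeLine S)
    (X Y : Finset (Fin 2 → ℤ)) (hXY : X ≠ Y)
    (h : TomEq (↑𝓛 : Set (Submodule ℝ (Fin 2 → ℝ))) (embed '' ↑X) (embed '' ↑Y)) :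
    ∀ i j : ℕ, i + j ≤ m →
      ∑ x ∈ X, (x 0) ^ i * (x 1) ^ j = ∑ y ∈ Y, (y 0) ^ i * (y 1) ^ j := by
  classical
  intro i j hij
  set n : ℕ := i + j with hn
  set D : ℕ → ℤ := fun k =>
    (∑ x ∈ X, (x 0) ^ k * (x 1) ^ (n - k)) - (∑ y ∈ Y, (y 0) ^ k * (y 1) ^ (n - k)) with hD
  set c : ℕ → ℤ := fun k => (n.choose k : ℤ) * D k with hc
  -- each line yields a linear relation on the moment differences
  have key : ∀ S ∈ 𝓛, ∃ v : Fin 2 → ℤ, v ≠ 0 ∧ S = Submodule.span ℝ {embed v} ∧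
      ∑ k ∈ Finset.range (n + 1), c k * (v 1) ^ k * (-(v 0)) ^ (n - k) = 0 := by
    intro S hS
    obtain ⟨v, hv, hSpan⟩ := h𝓛 S hS
    have hSpan' : S = Submodule.span ℝ {embed v} := hSpan
    refine ⟨v, hv, hSpan', ?_⟩
    have hx : XrayEq (Submodule.span ℝ {embed v}) (embed '' ↑X) (embed '' ↑Y) := by
      rw [← hSpan']; exact h S hS
    have hsum := sum_f_eq v hv X Y hx (fun t => t ^ n)
    have expand : ∀ F : Finset (Fin 2 → ℤ),
        ∑ x ∈ F, (v 1 * x 0 - v 0 * x 1) ^ n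
          = ∑ k ∈ Finset.range (n + 1),
              (n.choose k : ℤ) * (v 1) ^ k * (-(v 0)) ^ (n - k)
                * ∑ x ∈ F, (x 0) ^ k * (x 1) ^ (n - k) := by
      intro F
      have hterm : ∀ x : Fin 2 → ℤ, (v 1 * x 0 - v 0 * x 1) ^ n
          = ∑ k ∈ Finset.range (n + 1),
              (n.choose k : ℤ) * (v 1) ^ k * (-(v 0)) ^ (n - k)
                * ((x 0) ^ k * (x 1) ^ (n - k)) := by
        intro x
        rw [sub_eq_add_neg, ← neg_mul, add_pow]
        apply Finset.sum_congr rfl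
        intro k _
        rw [mul_pow, mul_pow]
        ring
      rw [Finset.sum_congr rfl fun x _ => hterm x, Finset.sum_comm]
      apply Finset.sum_congr rfl
      intro k _
      rw [Finset.mul_sum]
    have e : ∑ k ∈ Finset.range (n + 1),
        c k * (v 1) ^ k * (-(v 0)) ^ (n - k)
          = (∑ x ∈ X, (v 1 * x 0 - v 0 * x 1) ^ n)
            - (∑ y ∈ Y, (v 1 * y 0 - v 0 * y 1) ^ n) := by
      rw [expand X, expand Y, ← Finset.sum_sub_distrib]
      apply Finset.sum_congr rfl
      intro k _
      simp only [hc, hD]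
      ring
    rw [e, sub_eq_zero]
    exact hsum
  choose! vf hvf0 hvfspan hvfeq using key
  -- distinct lines have non-proportional direction vectors
  have cross_eq : ∀ S ∈ 𝓛, ∀ S' ∈ 𝓛, vf S 0 * vf S' 1 = vf S 1 * vf S' 0 → S = S' := by
    intro S hS S' hS' hrel
    rw [hvfspan S hS, hvfspan S' hS']
    exact span_eq_of_cross _ _ (hvf0 S hS) (hvf0 S' hS') hrel
  have hBcard : (𝓛.filter fun S => vf S 0 = 0).card ≤ 1 := by
    apply Finset.card_le_one.mpr
    intro S hS S' hS'
    rw [Finset.mem_filter] at hS hS'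
    exact cross_eq S hS.1 S' hS'.1 (by rw [hS.2, hS'.2, zero_mul, mul_zero])
  have hsplit := Finset.card_filter_add_card_filter_not
    (s := 𝓛) (p := fun S => vf S 0 = 0)
  set 𝓐 := 𝓛.filter (fun S => ¬ vf S 0 = 0) with h𝓐
  set R : Finset ℚ := 𝓐.image (fun S => (vf S 1 : ℚ) / (-(vf S 0) : ℚ)) with hRdef
  have hRcard : R.card = 𝓐.card := by
    apply Finset.card_image_of_injOn
    intro S hS S' hS' hroot
    simp only [Finset.mem_coe, h𝓐, Finset.mem_filter] at hS hS'
    have hb : (-(vf S 0) : ℚ) ≠ 0 := by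
      simpa using (Int.cast_ne_zero (α := ℚ)).mpr hS.2
    have hb' : (-(vf S' 0) : ℚ) ≠ 0 := by
      simpa using (Int.cast_ne_zero (α := ℚ)).mpr hS'.2
    rw [div_eq_div_iff hb hb'] at hroot
    apply cross_eq S hS.1 S' hS'.1
    have : (vf S 1 : ℚ) * -(vf S' 0) = (vf S' 1 : ℚ) * -(vf S 0) := hroot
    have h2 : (vf S 0 : ℚ) * (vf S' 1) = (vf S 1 : ℚ) * (vf S' 0) := by
      linear_combination this
    exact_mod_cast h2
  set P : Polynomial ℚ :=
    ∑ k ∈ Finset.range (n + 1), Polynomial.C ((c k : ℚ)) * Polynomial.X ^ k with hP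
  have hPeval : ∀ r ∈ R, P.eval r = 0 := by
    intro r hr
    obtain ⟨S, hSA, rfl⟩ := Finset.mem_image.mp hr
    rw [h𝓐, Finset.mem_filter] at hSA
    obtain ⟨hS𝓛, hBS⟩ := hSA
    have hb : (-(vf S 0) : ℚ) ≠ 0 := by
      simpa using (Int.cast_ne_zero (α := ℚ)).mpr hBS
    have heval : P.eval ((vf S 1 : ℚ) / (-(vf S 0) : ℚ))
        = ∑ k ∈ Finset.range (n + 1),
            (c k : ℚ) * ((vf S 1 : ℚ) / (-(vf S 0) : ℚ)) ^ k := by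
      simp [hP, Polynomial.eval_finset_sum]
    rw [heval]
    have hzero : ∑ k ∈ Finset.range (n + 1),
        (c k : ℚ) * (vf S 1 : ℚ) ^ k * (-(vf S 0) : ℚ) ^ (n - k) = 0 := by
      have hz := hvfeq S hS𝓛
      have hz' : ((∑ k ∈ Finset.range (n + 1),
          c k * (vf S 1) ^ k * (-(vf S 0)) ^ (n - k) : ℤ) : ℚ) = 0 := by
        rw [hz]; norm_num
      push_cast at hz'
      convert hz' using 2
    have hmul : (-(vf S 0) : ℚ) ^ n * ∑ k ∈ Finset.range (n + 1),
        (c k : ℚ) * ((vf S 1 : ℚ) / (-(vf S 0) : ℚ)) ^ k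
          = ∑ k ∈ Finset.range (n + 1),
              (c k : ℚ) * (vf S 1 : ℚ) ^ k * (-(vf S 0) : ℚ) ^ (n - k) := by
      rw [Finset.mul_sum]
      apply Finset.sum_congr rfl
      intro k hk
      have hkn : k ≤ n := Nat.lt_succ_iff.mp (Finset.mem_range.mp hk)
      have hpow : (-(vf S 0) : ℚ) ^ n = (-(vf S 0) : ℚ) ^ (n - k) * (-(vf S 0) : ℚ) ^ k := by
        rw [← pow_add]; congr 1; omega
      rw [div_pow, hpow]
      field_simp
    have := hmul.trans hzero
    rcases mul_eq_zero.mp this with h1 | h2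
    · exact absurd h1 (pow_ne_zero n hb)
    · exact h2
  -- show all coefficients vanish
  have hPzero : P = 0 := by
    rcases Finset.eq_empty_or_nonempty (𝓛.filter fun S => vf S 0 = 0) with hemp | hne
    · -- no vertical line: m+1 distinct roots
      have hAc : 𝓐.card = m + 1 := by
        rw [hemp, Finset.card_empty, hcard] at hsplit
        omega
      have hdeg : P.natDegree ≤ n := by
        apply Polynomial.natDegree_sum_le_of_forall_le
        intro k hk
        refine (Polynomial.natDegree_C_mul_le _ _).trans ?_
        rw [Polynomial.natDegree_X_pow]
        exact Nat.lt_succ_iff.mp (Finset.mem_range.mp hk)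
      exact Polynomial.eq_zero_of_natDegree_lt_card_of_eval_eq_zero' P R hPeval
        (by rw [hRcard, hAc]; omega)
    · -- one vertical line gives c n = 0; the rest give n roots
      obtain ⟨S₀, hS₀⟩ := hne
      rw [Finset.mem_filter] at hS₀
      obtain ⟨hS₀𝓛, hv00⟩ := hS₀
      have hv10 : vf S₀ 1 ≠ 0 := by
        rcases vcases (vf S₀) (hvf0 S₀ hS₀𝓛) with h0 | h1
        · exact absurd hv00 h0
        · exact h1
      have hcn : c n = 0 := by
        have hz := hvfeq S₀ hS₀𝓛
        rw [hv00] at hz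
        rw [Finset.sum_range_succ] at hz
        have hrest : ∑ k ∈ Finset.range n, c k * (vf S₀ 1) ^ k * (-(0:ℤ)) ^ (n - k) = 0 := by
          apply Finset.sum_eq_zero
          intro k hk
          have : n - k ≠ 0 := by
            have := Finset.mem_range.mp hk; omega
          rw [neg_zero, zero_pow this, mul_zero]
        rw [hrest, zero_add, Nat.sub_self, pow_zero, mul_one] at hz
        rcases mul_eq_zero.mp hz with h1 | h2
        · exact h1
        · exact absurd h2 (pow_ne_zero n hv10)
      have hPalt : P = ∑ k ∈ Finset.range n, Polynomial.C ((c k : ℚ)) * Polynomial.X ^ k := by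
        rw [hP, Finset.sum_range_succ, hcn]
        simp
      by_cases hn0 : n = 0
      · rw [hPalt, hn0]
        simp
      · have hdeg : P.natDegree ≤ n - 1 := by
          rw [hPalt]
          apply Polynomial.natDegree_sum_le_of_forall_le
          intro k hk
          refine (Polynomial.natDegree_C_mul_le _ _).trans ?_
          rw [Polynomial.natDegree_X_pow]
          have := Finset.mem_range.mp hk
          omega
        have hAc : m ≤ 𝓐.card := by omega
        apply Polynomial.eq_zero_of_natDegree_lt_card_of_eval_eq_zero' P R hPeval
        rw [hRcard]
        omega
  -- extract the coefficient
  have hciQ : (c i : ℚ) = 0 := by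
    have hco : P.coeff i = (c i : ℚ) := by
      rw [hP, Polynomial.finset_sum_coeff]
      simp only [Polynomial.coeff_C_mul, Polynomial.coeff_X_pow]
      rw [Finset.sum_eq_single i]
      · simp
      · intro k _ hki
        simp [Ne.symm hki]
      · intro hi
        exact absurd (Finset.mem_range.mpr (by omega)) hi
    rw [hPzero] at hco
    simpa using hco.symm
  have hci : c i = 0 := by exact_mod_cast hciQ
  have hDi : D i = 0 := by
    rcases mul_eq_zero.mp hci with h1 | h2
    · exfalso
      have hp : 0 < n.choose i := Nat.choose_pos (by omega)
      exact (Int.natCast_ne_zero.mpr hp.ne') h1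
    · exact h2
  have hji : n - i = j := by omega
  have := sub_eq_zero.mp hDi
  rw [hji] at this
  exact this
end

section
/- (Prouhet) Let k ∈ ℕ and let s₂(p) denote the binary digit sum of p ∈ ℕ₀. Set X = {p ∈ {0, 1, …, 2^{k+1} − 1} : s₂(p) is even} and Y = {p ∈ {0, 1, …, 2^{k+1} − 1} : s₂(p) is odd}. Then |X| = |Y| = 2^k and Σ_{x ∈ X} x^j = Σ_{y ∈ Y} y^j for every j with 1 ≤ j ≤ k; i.e., (X, Y) is a (k, 2^k)-solution of the Prouhet–Tarry–Escott problem. -/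
open Finset

lemma digitsum_step (x : ℕ) :
    (Nat.digits 2 x).sum = x % 2 + (Nat.digits 2 (x / 2)).sum := by
  rcases Nat.eq_zero_or_pos x with h | h
  · simp [h]
  · rw [Nat.digits_def' (by norm_num : 1 < 2) h]
    simp

lemma digitsum_add_pow (n : ℕ) : ∀ p < 2 ^ n,
    (Nat.digits 2 (2 ^ n + p)).sum = (Nat.digits 2 p).sum + 1 := by
  induction n with
  | zero =>
    intro p hp
    interval_cases p
    simp
  | succ n ih =>
    intro p hp
    have hc : 2 ^ (n + 1) = 2 * 2 ^ n := by ring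
    have hdiv : (2 ^ (n + 1) + p) / 2 = 2 ^ n + p / 2 := by omega
    have hmod : (2 ^ (n + 1) + p) % 2 = p % 2 := by omega
    have hlt : p / 2 < 2 ^ n := by omega
    rw [digitsum_step (2 ^ (n + 1) + p), digitsum_step p, hdiv, hmod,
      ih (p / 2) hlt]
    omega

noncomputable def pA (n j : ℕ) : ℕ :=
  ∑ p ∈ Finset.range (2 ^ n), if Even (Nat.digits 2 p).sum then p ^ j else 0

noncomputable def pB (n j : ℕ) : ℕ :=
  ∑ p ∈ Finset.range (2 ^ n), if Odd (Nat.digits 2 p).sum then p ^ j else 0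

lemma shift_sum (n j : ℕ) (P : ℕ → Prop) [DecidablePred P] :
    ∑ p ∈ Finset.range (2 ^ n), (if P p then (p + 2 ^ n) ^ j else 0)
      = ∑ m ∈ Finset.range (j + 1),
          (∑ p ∈ Finset.range (2 ^ n), if P p then p ^ m else 0)
            * ((2 ^ n) ^ (j - m) * j.choose m) := by
  have h1 : ∀ p, (if P p then (p + 2 ^ n) ^ j else 0)
      = ∑ m ∈ Finset.range (j + 1),
          (if P p then p ^ m else 0) * ((2 ^ n) ^ (j - m) * j.choose m) := by
    intro p
    split_ifs with h
    · rw [add_pow]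
      apply Finset.sum_congr rfl
      intro m _
      simp [mul_assoc]
    · simp
  rw [Finset.sum_congr rfl fun p _ => h1 p, Finset.sum_comm]
  exact Finset.sum_congr rfl fun m _ => (Finset.sum_mul _ _ _).symm

lemma pA_succ (n j : ℕ) :
    pA (n + 1) j = pA n j + ∑ m ∈ Finset.range (j + 1),
      pB n m * ((2 ^ n) ^ (j - m) * j.choose m) := by
  unfold pA pB
  have h2 : 2 ^ (n + 1) = 2 ^ n + 2 ^ n := by ring
  rw [h2, Finset.sum_range_add]
  congr 1
  rw [← shift_sum n j (fun p => Odd (Nat.digits 2 p).sum)]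
  apply Finset.sum_congr rfl
  intro p hp
  have hp' : p < 2 ^ n := Finset.mem_range.mp hp
  rw [digitsum_add_pow n p hp', add_comm (2 ^ n) p]
  simp [Nat.even_add_one, Nat.not_even_iff_odd]

lemma pB_succ (n j : ℕ) :
    pB (n + 1) j = pB n j + ∑ m ∈ Finset.range (j + 1),
      pA n m * ((2 ^ n) ^ (j - m) * j.choose m) := by
  unfold pA pB
  have h2 : 2 ^ (n + 1) = 2 ^ n + 2 ^ n := by ring
  rw [h2, Finset.sum_range_add]
  congr 1
  rw [← shift_sum n j (fun p => Even (Nat.digits 2 p).sum)]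
  apply Finset.sum_congr rfl
  intro p hp
  have hp' : p < 2 ^ n := Finset.mem_range.mp hp
  rw [digitsum_add_pow n p hp', add_comm (2 ^ n) p]
  simp [Nat.odd_add_one]

lemma key : ∀ n, ∀ j < n, pA n j = pB n j := by
  intro n
  induction n with
  | zero => omega
  | succ n ih =>
    intro j hj
    rw [pA_succ, pB_succ, Finset.sum_range_succ, Finset.sum_range_succ]
    have h1 : ∀ m ∈ Finset.range j,
        pB n m * ((2 ^ n) ^ (j - m) * j.choose m)
          = pA n m * ((2 ^ n) ^ (j - m) * j.choose m) := by
      intro m hm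
      rw [ih m (by have := Finset.mem_range.mp hm; omega)]
    rw [Finset.sum_congr rfl h1]
    simp [Nat.choose_self, Nat.sub_self]
    ring

theorem prouhet
    (k : ℕ) (hk : 1 ≤ k)
    (X Y : Finset ℕ)
    (hX : X = (Finset.range (2 ^ (k + 1))).filter fun p => Even (Nat.digits 2 p).sum)
    (hY : Y = (Finset.range (2 ^ (k + 1))).filter fun p => Odd (Nat.digits 2 p).sum) :
    X.card = 2 ^ k ∧ Y.card = 2 ^ k ∧
    ∀ j : ℕ, 1 ≤ j → j ≤ k → ∑ x ∈ X, x ^ j = ∑ y ∈ Y, y ^ j := by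
  have hXsum : ∀ j, ∑ x ∈ X, x ^ j = pA (k + 1) j := by
    intro j
    rw [hX, pA, Finset.sum_filter]
  have hYsum : ∀ j, ∑ y ∈ Y, y ^ j = pB (k + 1) j := by
    intro j
    rw [hY, pB, Finset.sum_filter]
  have hcardX : X.card = pA (k + 1) 0 := by
    rw [Finset.card_eq_sum_ones]
    simpa using hXsum 0
  have hcardY : Y.card = pB (k + 1) 0 := by
    rw [Finset.card_eq_sum_ones]
    simpa using hYsum 0
  have hXY : X.card = Y.card := by
    rw [hcardX, hcardY, key (k + 1) 0 (by omega)]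
  have htot : X.card + Y.card = 2 ^ (k + 1) := by
    rw [hX, hY]
    rw [show ((Finset.range (2 ^ (k + 1))).filter fun p => Odd (Nat.digits 2 p).sum)
        = (Finset.range (2 ^ (k + 1))).filter fun p => ¬ Even (Nat.digits 2 p).sum from
      Finset.filter_congr fun p _ => (Nat.not_even_iff_odd).symm]
    rw [Finset.card_filter_add_card_filter_not, Finset.card_range]
  have h2 : 2 ^ (k + 1) = 2 * 2 ^ k := by ring
  refine ⟨by omega, by omega, ?_⟩
  intro j _ hjk
  rw [hXsum, hYsum, key (k + 1) j (by omega)]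
end

section
/- (Bastien) Let k, n ∈ ℕ with n ≤ k, and let X and Y be multisets of integers, each of cardinality n, such that Σ_{x ∈ X} x^j = Σ_{y ∈ Y} y^j for all j = 1, …, k. Then X = Y as multisets. In particular, there exist no (k, n)-solutions of the Prouhet–Tarry–Escott problem with n < k + 1. -/
open Polynomial Finset

lemma newton_multiset (s : Multiset ℤ) (i : ℕ) :
    (i : ℤ) * s.esymm i = (-1) ^ (i + 1) *
      ∑ a ∈ Finset.HasAntidiagonal.antidiagonal i with a.1 < i,
        (-1) ^ a.1 * s.esymm a.1 * (s.map (· ^ a.2)).sum := by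
  obtain ⟨l, rfl⟩ : ∃ l : List ℤ, (l : Multiset ℤ) = s := ⟨s.toList, s.coe_toList⟩
  have key := congrArg (MvPolynomial.aeval (fun j : Fin l.length => l.get j))
    (MvPolynomial.mul_esymm_eq_sum (Fin l.length) ℤ i)
  have he : ∀ m : ℕ, MvPolynomial.aeval (fun j : Fin l.length => l.get j)
      (MvPolynomial.esymm (Fin l.length) ℤ m) = (l : Multiset ℤ).esymm m := by
    intro m
    rw [MvPolynomial.aeval_esymm_eq_multiset_esymm]
    congr 1
    rw [Fin.univ_val_map]
    simp
  have hp : ∀ m : ℕ, MvPolynomial.aeval (fun j : Fin l.length => l.get j)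
      (MvPolynomial.psum (Fin l.length) ℤ m) = ((l : Multiset ℤ).map (· ^ m)).sum := by
    intro m
    simp only [MvPolynomial.psum, map_sum, map_pow, MvPolynomial.aeval_X]
    rw [← List.sum_ofFn, show List.ofFn (fun x : Fin l.length => l.get x ^ m)
        = l.map (· ^ m) from List.ofFn_getElem_eq_map l (· ^ m)]
    simp
  simp only [map_mul, map_natCast, map_pow, map_neg, map_one, map_sum, he, hp] at key
  exact key

theorem bastien
    (k n : ℕ) (hn : n ≤ k)
    (X Y : Multiset ℤ) (hX : Multiset.card X = n) (hY : Multiset.card Y = n)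
    (h : ∀ j : ℕ, 1 ≤ j → j ≤ k → (X.map (· ^ j)).sum = (Y.map (· ^ j)).sum) :
    X = Y := by
  have hesymm : ∀ i : ℕ, i ≤ n → X.esymm i = Y.esymm i := by
    intro i
    induction i using Nat.strong_induction_on with
    | _ i ih =>
      intro hin
      rcases Nat.eq_zero_or_pos i with hi0 | hi0
      · subst hi0; simp [Multiset.esymm]
      · have hmul : (i : ℤ) * X.esymm i = (i : ℤ) * Y.esymm i := by
          rw [newton_multiset, newton_multiset]
          congr 1
          apply Finset.sum_congr rfl
          intro a ha
          simp only [Finset.mem_filter, Finset.HasAntidiagonal.mem_antidiagonal] at ha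
          have ha1 : a.1 < i := ha.2
          have ha2 : 1 ≤ a.2 := by omega
          have ha2' : a.2 ≤ k := by omega
          rw [ih a.1 ha1 (by omega), h a.2 ha2 ha2']
        exact mul_left_cancel₀ (by exact_mod_cast hi0.ne') hmul
  set P := (X.map fun a => Polynomial.X - Polynomial.C a).prod with hP
  set Q := (Y.map fun a => Polynomial.X - Polynomial.C a).prod with hQ
  have hPQ : P = Q := by
    ext m
    rcases le_or_gt m n with hm | hm
    · rw [hP, hQ, Multiset.prod_X_sub_C_coeff X (by omega), Multiset.prod_X_sub_C_coeff Y (by omega),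
        hX, hY, hesymm (n - m) (by omega)]
    · rw [hP, hQ, Polynomial.coeff_eq_zero_of_natDegree_lt, Polynomial.coeff_eq_zero_of_natDegree_lt]
      · rw [Polynomial.natDegree_multiset_prod_X_sub_C_eq_card, hY]; omega
      · rw [Polynomial.natDegree_multiset_prod_X_sub_C_eq_card, hX]; omega
  calc X = P.roots := (Polynomial.roots_multiset_prod_X_sub_C X).symm
    _ = Q.roots := by rw [hPQ]
    _ = Y := Polynomial.roots_multiset_prod_X_sub_C Y
end
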